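/- Let A be a commuting family of skew-symmetric endomorphisms of a real inner product space of dimension 2m. Then there exists an orthonormal basis d₁,...,d_{2m} in which every T ∈ A has block-diagonal form with 2×2 blocks ((0, −λ_j(T)), (λ_j(T), 0)) for real numbers λ_j(T). -/

import Mathlib

open scoped RealInnerProductSpace
open Module Submodule

namespace Stmt15

variable {V : Type*} [NormedAddCommGroup V] [InnerProductSpace ℝ V]

/-- The family of restrictions of members of `A` to an invariant submodule `K`. -/
def restFam (A : Set (V →ₗ[ℝ] V)) (K : Submodule ℝ V) : Set (K →ₗ[ℝ] K) :=
  {S | ∃ T ∈ A, ∀ x : K, (S x : V) = T x}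

theorem mem_restFam {A : Set (V →ₗ[ℝ] V)} {K : Submodule ℝ V} {T : V →ₗ[ℝ] V}
    (hT : T ∈ A) (h : ∀ x ∈ K, T x ∈ K) : T.restrict h ∈ restFam A K :=
  ⟨T, hT, fun _ => rfl⟩

theorem restFam_skew {A : Set (V →ₗ[ℝ] V)} {K : Submodule ℝ V}
    (hskew : ∀ T ∈ A, ∀ u v : V, ⟪T u, v⟫ = -⟪u, T v⟫) :
    ∀ S ∈ restFam A K, ∀ u v : K, ⟪S u, v⟫ = -⟪u, S v⟫ := by
  rintro S ⟨T, hT, hrel⟩ u v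
  have h1 : ⟪S u, v⟫ = ⟪(S u : V), (v : V)⟫ := rfl
  have h2 : ⟪u, S v⟫ = ⟪(u : V), (S v : V)⟫ := rfl
  rw [h1, h2, hrel u, hrel v]
  exact hskew T hT u v

theorem restFam_comm {A : Set (V →ₗ[ℝ] V)} {K : Submodule ℝ V}
    (hcomm : ∀ T ∈ A, ∀ T' ∈ A, T ∘ₗ T' = T' ∘ₗ T) :
    ∀ S ∈ restFam A K, ∀ S' ∈ restFam A K, S ∘ₗ S' = S' ∘ₗ S := by
  rintro S ⟨T, hT, hrel⟩ S' ⟨T', hT', hrel'⟩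
  ext x
  have h1 : ((S (S' x) : V)) = T (T' x) := by rw [hrel, hrel']
  have h2 : ((S' (S x) : V)) = T' (T x) := by rw [hrel', hrel]
  have := LinearMap.ext_iff.mp (hcomm T hT T' hT') (x : V)
  simp only [LinearMap.comp_apply] at this ⊢
  rw [h1, h2]
  exact this


theorem symm_dichotomy [FiniteDimensional ℝ V] (hn : 0 < Module.finrank ℝ V)
    {S : V →ₗ[ℝ] V} (hS : S.IsSymmetric) :
    (∃ μ : ℝ, ∀ x : V, S x = μ • x) ∨
      (∃ μ : ℝ, Module.End.eigenspace S μ ≠ ⊥ ∧ Module.End.eigenspace S μ ≠ ⊤) := by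
  set n := Module.finrank ℝ V with hnn
  have hrk : Module.finrank ℝ V = n := rfl
  let b := hS.eigenvectorBasis hrk
  let ev := hS.eigenvalues hrk
  have hb : ∀ i, S (b i) = ev i • b i := fun i => hS.apply_eigenvectorBasis hrk i
  have hbne : ∀ i, b i ≠ 0 := fun i => (b.toBasis.ne_zero i)
  let i0 : Fin n := ⟨0, hn⟩
  by_cases hall : ∀ i, ev i = ev i0
  · left
    refine ⟨ev i0, fun x => ?_⟩
    have : S = (ev i0) • (LinearMap.id : V →ₗ[ℝ] V) := by
      apply b.toBasis.ext
      intro i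
      simp only [OrthonormalBasis.coe_toBasis, LinearMap.smul_apply, LinearMap.id_apply]
      rw [hb i, hall i]
    rw [this]; rfl
  · right
    push_neg at hall
    obtain ⟨i, hi⟩ := hall
    refine ⟨ev i0, ?_, ?_⟩
    · intro hbot
      have : b i0 ∈ Module.End.eigenspace S (ev i0) := by
        rw [Module.End.mem_eigenspace_iff]; exact hb i0
      rw [hbot] at this
      exact hbne i0 (by simpa using this)
    · intro htop
      have : b i ∈ Module.End.eigenspace S (ev i0) := htop ▸ Submodule.mem_top
      rw [Module.End.mem_eigenspace_iff] at this
      rw [hb i] at this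
      have : (ev i - ev i0) • b i = 0 := by rw [sub_smul, this, sub_self]
      rcases smul_eq_zero.mp this with h | h
      · exact hi (by linarith [sub_eq_zero.mp h])
      · exact absurd h (hbne i)


theorem dim2_pair [FiniteDimensional ℝ V] {A : Set (V →ₗ[ℝ] V)}
    (hskew : ∀ T ∈ A, ∀ u v : V, ⟪T u, v⟫ = -⟪u, T v⟫)
    (W : Submodule ℝ V) (hW2 : Module.finrank ℝ W = 2)
    (hinv : ∀ T ∈ A, ∀ x ∈ W, T x ∈ W) :
    ∃ e f : V, ‖e‖ = 1 ∧ ‖f‖ = 1 ∧ ⟪e, f⟫ = 0 ∧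
      ∀ T ∈ A, ∃ lam : ℝ, T e = lam • f ∧ T f = -(lam • e) := by
  let bW := (stdOrthonormalBasis ℝ W).reindex (finCongr hW2)
  set e : V := (bW 0 : V) with he
  set f : V := (bW 1 : V) with hf
  have hne : ‖e‖ = 1 := bW.orthonormal.1 0
  have hnf : ‖f‖ = 1 := bW.orthonormal.1 1
  have hef : ⟪e, f⟫ = 0 := bW.orthonormal.2 (by decide : (0 : Fin 2) ≠ 1)
  have hexp : ∀ y : W, (y : V) = ⟪e, (y : V)⟫ • e + ⟪f, (y : V)⟫ • f := by
    intro y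
    conv_lhs => rw [← bW.sum_repr y]
    rw [Fin.sum_univ_two]
    push_cast
    congr 1 <;> rw [bW.repr_apply_apply] <;> rfl
  refine ⟨e, f, hne, hnf, hef, fun T hT => ?_⟩
  have hee : ∀ u : V, ⟪u, T u⟫ = 0 := by
    intro u
    have h1 := hskew T hT u u
    have h2 := real_inner_comm u (T u)
    linarith
  have h1 : T e ∈ W := hinv T hT e (SetLike.coe_mem _)
  have h2 : T f ∈ W := hinv T hT f (SetLike.coe_mem _)
  refine ⟨⟪f, T e⟫, ?_, ?_⟩
  · have := hexp ⟨T e, h1⟩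
    simpa [hee e] using this
  · have := hexp ⟨T f, h2⟩
    simp only [hee f, zero_smul, add_zero] at this
    rw [this]
    have h3 : ⟪e, T f⟫ = -⟪f, T e⟫ := by
      have h4 := hskew T hT e f
      have h5 := real_inner_comm f (T e)
      have h6 := real_inner_comm e (T f)
      linarith
    rw [h3, neg_smul]

theorem dim1_kernel [FiniteDimensional ℝ V] {A : Set (V →ₗ[ℝ] V)}
    (hskew : ∀ T ∈ A, ∀ u v : V, ⟪T u, v⟫ = -⟪u, T v⟫)
    (W : Submodule ℝ V) (hW1 : Module.finrank ℝ W = 1)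
    (hinv : ∀ T ∈ A, ∀ x ∈ W, T x ∈ W) :
    ∃ e : V, ‖e‖ = 1 ∧ e ∈ W ∧ ∀ T ∈ A, T e = 0 := by
  let bW := (stdOrthonormalBasis ℝ W).reindex (finCongr hW1)
  set e : V := (bW 0 : V) with he
  have hne : ‖e‖ = 1 := bW.orthonormal.1 0
  have hexp : ∀ y : W, (y : V) = ⟪e, (y : V)⟫ • e := by
    intro y
    conv_lhs => rw [← bW.sum_repr y]
    rw [Fin.sum_univ_one]
    push_cast
    rw [bW.repr_apply_apply]
    rfl
  refine ⟨e, hne, SetLike.coe_mem _, fun T hT => ?_⟩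
  have hee : ⟪e, T e⟫ = 0 := by
    have h1 := hskew T hT e e
    have h2 := real_inner_comm e (T e)
    linarith
  have h1 : T e ∈ W := hinv T hT e (SetLike.coe_mem _)
  have := hexp ⟨T e, h1⟩
  simpa [hee] using this


theorem orth_inv {A : Set (V →ₗ[ℝ] V)}
    (hskew : ∀ T ∈ A, ∀ u v : V, ⟪T u, v⟫ = -⟪u, T v⟫)
    (W : Submodule ℝ V) (hWinv : ∀ T ∈ A, ∀ x ∈ W, T x ∈ W) :
    ∀ T ∈ A, ∀ x ∈ Wᗮ, T x ∈ Wᗮ := by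
  intro T hT x hx
  rw [Submodule.mem_orthogonal] at hx ⊢
  intro u hu
  have h1 := hskew T hT x u
  have h2 := hx (T u) (hWinv T hT u hu)
  have h3 := real_inner_comm u (T x)
  have h4 := real_inner_comm (T u) x
  linarith

theorem map_inv {A : Set (V →ₗ[ℝ] V)} {K : Submodule ℝ V}
    (hK : ∀ T ∈ A, ∀ x ∈ K, T x ∈ K) {W' : Submodule ℝ K}
    (hW' : ∀ S ∈ restFam A K, ∀ y ∈ W', S y ∈ W') :
    ∀ T ∈ A, ∀ x ∈ W'.map K.subtype, T x ∈ W'.map K.subtype := by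
  intro T hT x hx
  obtain ⟨y, hy, rfl⟩ := hx
  exact ⟨(T.restrict (hK T hT)) y, hW' _ (mem_restFam hT (hK T hT)) y hy, rfl⟩

universe u

theorem lemP (n : ℕ) : ∀ {V : Type u} [NormedAddCommGroup V] [InnerProductSpace ℝ V]
    [FiniteDimensional ℝ V], Module.finrank ℝ V = n → 0 < n →
    ∀ (A : Set (V →ₗ[ℝ] V)), (∀ T ∈ A, ∀ u v : V, ⟪T u, v⟫ = -⟪u, T v⟫) →
    (∀ T ∈ A, ∀ T' ∈ A, T ∘ₗ T' = T' ∘ₗ T) →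
    ∃ W : Submodule ℝ V, W ≠ ⊥ ∧ Module.finrank ℝ W ≤ 2 ∧ ∀ T ∈ A, ∀ x ∈ W, T x ∈ W := by
  induction n using Nat.strong_induction_on with
  | _ n ih =>
  intro V _ _ _ hdim hn A hskew hcomm
  have hnt : Nontrivial V := Module.finrank_pos_iff.mp (hdim ▸ hn)
  have descend : ∀ (K : Submodule ℝ V), K ≠ ⊥ → K ≠ ⊤ → (∀ T ∈ A, ∀ x ∈ K, T x ∈ K) →
      ∃ W : Submodule ℝ V, W ≠ ⊥ ∧ Module.finrank ℝ W ≤ 2 ∧ ∀ T ∈ A, ∀ x ∈ W, T x ∈ W := by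
    intro K hKbot hKtop hKinv
    have hlt : Module.finrank ℝ K < n := hdim ▸ Submodule.finrank_lt hKtop
    have hpos : 0 < Module.finrank ℝ K := by
      have := (Submodule.nontrivial_iff_ne_bot).mpr hKbot
      exact Module.finrank_pos
    obtain ⟨W', hW'bot, hW'rk, hW'inv⟩ :=
      ih _ hlt rfl hpos (restFam A K) (restFam_skew hskew) (restFam_comm hcomm)
    refine ⟨W'.map K.subtype, ?_, ?_, map_inv hKinv hW'inv⟩
    · obtain ⟨y, hy, hy0⟩ := Submodule.exists_mem_ne_zero_of_ne_bot hW'bot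
      exact Submodule.ne_bot_iff _ |>.mpr ⟨(y : V), Submodule.mem_map_of_mem hy,
        by simpa using hy0⟩
    · rw [Submodule.finrank_map_subtype_eq]; exact hW'rk
  by_cases hz : ∀ T ∈ A, T = 0
  · obtain ⟨x, hx⟩ := exists_ne (0 : V)
    refine ⟨ℝ ∙ x, by simp [Submodule.span_singleton_eq_bot, hx], ?_, ?_⟩
    · rw [finrank_span_singleton hx]; omega
    · intro T hT y hy; rw [hz T hT]; simpa using Submodule.zero_mem _
  · push_neg at hz
    obtain ⟨T₀, hT₀A, hT₀⟩ := hz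
    have hS : (T₀ ∘ₗ T₀).IsSymmetric := by
      intro u v
      have h1 := hskew T₀ hT₀A (T₀ u) v
      have h2 := hskew T₀ hT₀A u (T₀ v)
      simp only [LinearMap.comp_apply]
      linarith
    have eiginv : ∀ (S : V →ₗ[ℝ] V), (∀ T ∈ A, T ∘ₗ S = S ∘ₗ T) → ∀ (μ : ℝ),
        ∀ T ∈ A, ∀ x ∈ Module.End.eigenspace S μ, T x ∈ Module.End.eigenspace S μ := by
      intro S hcS μ T hT x hx
      rw [Module.End.mem_eigenspace_iff] at hx ⊢
      have h := LinearMap.ext_iff.mp (hcS T hT) x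
      simp only [LinearMap.comp_apply] at h
      rw [← h, hx, map_smul]
    have hcomm₀ : ∀ T ∈ A, T ∘ₗ (T₀ ∘ₗ T₀) = (T₀ ∘ₗ T₀) ∘ₗ T := by
      intro T hT
      have h := hcomm T hT T₀ hT₀A
      rw [← LinearMap.comp_assoc, h, LinearMap.comp_assoc, h, LinearMap.comp_assoc]
    rcases symm_dichotomy (hdim ▸ hn) hS with ⟨μ, hμ⟩ | ⟨μ, hbot, htop⟩
    swap
    · exact descend _ hbot htop (eiginv _ hcomm₀ μ)
    have hμ' : ∀ x, T₀ (T₀ x) = μ • x := fun x => by simpa using hμ x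
    have hμ0 : μ ≠ 0 := by
      obtain ⟨x, hx⟩ : ∃ x, T₀ x ≠ 0 := by
        by_contra h
        push_neg at h
        exact hT₀ (LinearMap.ext fun x => by simpa using h x)
      have h1 := hskew T₀ hT₀A (T₀ x) x
      rw [hμ' x] at h1
      intro hμ0
      rw [hμ0] at h1
      simp at h1
      exact hx h1
    by_cases hsc : ∀ T ∈ A, ∃ ν : ℝ, ∀ x, T (T₀ x) = ν • x
    · obtain ⟨x, hx⟩ := exists_ne (0 : V)
      have hxmem : x ∈ span ℝ ({x, T₀ x} : Set V) :=
        subset_span (Set.mem_insert _ _)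
      have hymem : T₀ x ∈ span ℝ ({x, T₀ x} : Set V) :=
        subset_span (Set.mem_insert_of_mem _ rfl)
      refine ⟨span ℝ ({x, T₀ x} : Set V), ?_, ?_, ?_⟩
      · exact Submodule.ne_bot_iff _ |>.mpr ⟨x, hxmem, hx⟩
      · have hone : ∀ v : V, Module.finrank ℝ (ℝ ∙ v) ≤ 1 := by
          intro v
          by_cases hv : v = 0
          · rw [hv, Submodule.span_zero_singleton, finrank_bot]
            omega
          · rw [finrank_span_singleton hv]
        rw [show ({x, T₀ x} : Set V) = insert x {T₀ x} from rfl, Submodule.span_insert]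
        refine le_trans (Submodule.finrank_add_le_finrank_add_finrank _ _) ?_
        have h1 := hone x
        have h2 := hone (T₀ x)
        omega
      · intro T hT y hy
        obtain ⟨ν, hν⟩ := hsc T hT
        have hTx : T x = (ν / μ) • T₀ x := by
          have h1 : T₀ (T₀ (T x)) = μ • T x := hμ' (T x)
          have h2 : T₀ (T x) = ν • x := by
            have hc := LinearMap.ext_iff.mp (hcomm T hT T₀ hT₀A) x
            simp only [LinearMap.comp_apply] at hc
            rw [← hc]
            exact hν x
          rw [h2, map_smul] at h1
          have h7 : μ⁻¹ • (ν • T₀ x) = μ⁻¹ • (μ • T x) := by rw [h1]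
          rw [smul_smul, smul_smul, inv_mul_cancel₀ hμ0, one_smul] at h7
          rw [div_eq_inv_mul]
          exact h7.symm
        induction hy using Submodule.span_induction with
        | mem z hz =>
          rcases hz with hz | hz
          · rw [hz, hTx]; exact Submodule.smul_mem _ _ hymem
          · rw [Set.mem_singleton_iff] at hz
            rw [hz, hν x]; exact Submodule.smul_mem _ _ hxmem
        | zero => simpa using Submodule.zero_mem _
        | add a b _ _ ha hb => rw [map_add]; exact Submodule.add_mem _ ha hb
        | smul c a _ ha => rw [map_smul]; exact Submodule.smul_mem _ _ ha
    · push_neg at hsc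
      obtain ⟨T₁, hT₁A, hT₁⟩ := hsc
      have hS1 : (T₁ ∘ₗ T₀).IsSymmetric := by
        intro u v
        have h1 := hskew T₁ hT₁A (T₀ u) v
        have h2 := hskew T₀ hT₀A u (T₁ v)
        have hc := LinearMap.ext_iff.mp (hcomm T₀ hT₀A T₁ hT₁A) v
        simp only [LinearMap.comp_apply] at hc ⊢
        rw [hc] at h2
        linarith
      have hc1 : ∀ T ∈ A, T ∘ₗ (T₁ ∘ₗ T₀) = (T₁ ∘ₗ T₀) ∘ₗ T := by
        intro T hT
        have h1 := hcomm T hT T₁ hT₁A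
        have h0 := hcomm T hT T₀ hT₀A
        rw [← LinearMap.comp_assoc, h1, LinearMap.comp_assoc, h0, LinearMap.comp_assoc]
      rcases symm_dichotomy (hdim ▸ hn) hS1 with ⟨ν, hν⟩ | ⟨ν, hbot, htop⟩
      · obtain ⟨x, hx⟩ := hT₁ ν
        exact absurd (by simpa using hν x) hx
      · exact descend _ hbot htop (eiginv _ hc1 ν)


theorem pairLemma (n : ℕ) : ∀ {V : Type u} [NormedAddCommGroup V] [InnerProductSpace ℝ V]
    [FiniteDimensional ℝ V], Module.finrank ℝ V = n → 2 ≤ n →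
    ∀ (A : Set (V →ₗ[ℝ] V)), (∀ T ∈ A, ∀ u v : V, ⟪T u, v⟫ = -⟪u, T v⟫) →
    (∀ T ∈ A, ∀ T' ∈ A, T ∘ₗ T' = T' ∘ₗ T) →
    ∃ e f : V, ‖e‖ = 1 ∧ ‖f‖ = 1 ∧ ⟪e, f⟫ = 0 ∧
      ∀ T ∈ A, ∃ lam : ℝ, T e = lam • f ∧ T f = -(lam • e) := by
  induction n using Nat.strong_induction_on with
  | _ n ih =>
  intro V _ _ _ hdim hn A hskew hcomm
  obtain ⟨W, hWbot, hWrk, hWinv⟩ := lemP n hdim (by omega) A hskew hcomm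
  have hWpos : 0 < Module.finrank ℝ W := by
    have := Submodule.nontrivial_iff_ne_bot.mpr hWbot
    exact Module.finrank_pos
  rcases (by omega : Module.finrank ℝ W = 1 ∨ Module.finrank ℝ W = 2) with h1 | h2
  · obtain ⟨e, hne, heW, hek⟩ := dim1_kernel hskew W h1 hWinv
    have hKinv := orth_inv hskew W hWinv
    have hrkK : Module.finrank ℝ Wᗮ = n - 1 := by
      have := Submodule.finrank_add_finrank_orthogonal W
      omega
    rcases (by omega : Module.finrank ℝ Wᗮ = 1 ∨ 2 ≤ Module.finrank ℝ Wᗮ) with hc | hc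
    · obtain ⟨f, hnf, hfK, hfk⟩ := dim1_kernel hskew Wᗮ hc hKinv
      refine ⟨e, f, hne, hnf, (Submodule.mem_orthogonal W f).mp hfK e heW,
        fun T hT => ⟨0, by simp [hek T hT, hfk T hT]⟩⟩
    · obtain ⟨e', f', hne', hnf', hef', hpair⟩ :=
        ih (n - 1) (by omega) (V := Wᗮ) hrkK (hrkK ▸ hc) (restFam A Wᗮ)
          (restFam_skew hskew) (restFam_comm hcomm)
      refine ⟨(e' : V), (f' : V), hne', hnf', hef', fun T hT => ?_⟩
      obtain ⟨lam, hl1, hl2⟩ :=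
        hpair (T.restrict (hKinv T hT)) (mem_restFam hT (hKinv T hT))
      exact ⟨lam, by simpa using congrArg Subtype.val hl1,
        by simpa using congrArg Subtype.val hl2⟩
  · exact dim2_pair hskew W h2 hWinv


theorem mainAux (m : ℕ) : ∀ {V : Type u} [NormedAddCommGroup V] [InnerProductSpace ℝ V]
    [FiniteDimensional ℝ V], Module.finrank ℝ V = 2 * m →
    ∀ (A : Set (V →ₗ[ℝ] V)), (∀ T ∈ A, ∀ u v : V, ⟪T u, v⟫ = -⟪u, T v⟫) →
    (∀ T ∈ A, ∀ T' ∈ A, T ∘ₗ T' = T' ∘ₗ T) →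
    ∃ b : OrthonormalBasis (Fin (2 * m)) ℝ V,
      ∀ T ∈ A, ∀ j : Fin m, ∃ lam : ℝ,
        T (b ⟨2 * (j : ℕ), by omega⟩) = lam • b ⟨2 * (j : ℕ) + 1, by omega⟩ ∧
        T (b ⟨2 * (j : ℕ) + 1, by omega⟩) = -(lam • b ⟨2 * (j : ℕ), by omega⟩) := by
  induction m with
  | zero =>
    intro V _ _ _ hdim A hskew hcomm
    exact ⟨(stdOrthonormalBasis ℝ V).reindex (finCongr hdim), fun T hT j => j.elim0⟩
  | succ m ihm =>
    intro V _ _ _ hdim A hskew hcomm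
    obtain ⟨e, f, hne, hnf, hef, hpair⟩ :=
      pairLemma (2 * (m + 1)) hdim (by omega) A hskew hcomm
    have he1 : ⟪e, e⟫ = 1 := by rw [real_inner_self_eq_norm_sq, hne]; norm_num
    have hf1 : ⟪f, f⟫ = 1 := by rw [real_inner_self_eq_norm_sq, hnf]; norm_num
    have hfe : ⟪f, e⟫ = 0 := by rw [real_inner_comm]; exact hef
    have o2 : Orthonormal ℝ ![e, f] := by
      rw [orthonormal_iff_ite]
      intro i j
      fin_cases i <;> fin_cases j <;> simp [he1, hf1, hef, hfe, hne, hnf]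
    set W : Submodule ℝ V := span ℝ (Set.range ![e, f]) with hWdef
    have heW : e ∈ W := subset_span ⟨0, rfl⟩
    have hfW : f ∈ W := subset_span ⟨1, rfl⟩
    have hW2 : Module.finrank ℝ W = 2 := by
      rw [hWdef, finrank_span_eq_card o2.linearIndependent]
      simp
    have hWinv : ∀ T ∈ A, ∀ x ∈ W, T x ∈ W := by
      intro T hT x hx
      obtain ⟨lam, hl1, hl2⟩ := hpair T hT
      have h0 : T e ∈ W := by rw [hl1]; exact Submodule.smul_mem _ _ hfW
      have h1 : T f ∈ W := by rw [hl2]; exact Submodule.neg_mem _ (Submodule.smul_mem _ _ heW)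
      induction hx using Submodule.span_induction with
      | mem z hz =>
        obtain ⟨i, rfl⟩ := hz
        fin_cases i
        · exact h0
        · exact h1
      | zero => simpa using Submodule.zero_mem W
      | add a b _ _ ha hb => rw [map_add]; exact Submodule.add_mem _ ha hb
      | smul r a _ ha => rw [map_smul]; exact Submodule.smul_mem _ _ ha
    have hKinv := orth_inv hskew W hWinv
    have hrkK : Module.finrank ℝ (Wᗮ : Submodule ℝ V) = 2 * m := by
      have := Submodule.finrank_add_finrank_orthogonal W
      omega
    obtain ⟨c, hc⟩ := ihm (V := Wᗮ) hrkK (restFam A Wᗮ)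
      (restFam_skew hskew) (restFam_comm hcomm)
    set v : Fin (2 * (m + 1)) → V := fun i =>
      if h : (i : ℕ) < 2 then ![e, f] ⟨(i : ℕ), h⟩ else ↑(c ⟨(i : ℕ) - 2, by omega⟩) with hvdef
    have hv0 : ∀ (hh : 0 < 2 * (m + 1)), v ⟨0, hh⟩ = e := fun hh => by simp [hvdef]
    have hv1 : ∀ (hh : 1 < 2 * (m + 1)), v ⟨1, hh⟩ = f := fun hh => by rw [hvdef]; rfl
    have hv2 : ∀ (k : ℕ) (hh : k + 2 < 2 * (m + 1)),
        v ⟨k + 2, hh⟩ = ((c ⟨k, by omega⟩ : Wᗮ) : V) := by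
      intro k hh
      have h2' : ¬ (((⟨k + 2, hh⟩ : Fin (2 * (m + 1))) : ℕ) < 2) := by
        simp only [Fin.val_mk]; omega
      simp only [hvdef]
      rw [dif_neg h2']
      congr 2
    have hecz : ∀ x : V, x ∈ W → ∀ k, ⟪x, ↑(c k)⟫ = 0 := fun x hx k =>
      (Submodule.mem_orthogonal W _).mp (SetLike.coe_mem (c k)) x hx
    have hcc : ∀ k l, ⟪(c k : V), (c l : V)⟫ = if k = l then (1:ℝ) else 0 := fun k l =>
      orthonormal_iff_ite.mp c.orthonormal k l
    have key : ∀ (i j : ℕ) (hi : i < 2 * (m + 1)) (hj : j < 2 * (m + 1)),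
        ⟪v ⟨i, hi⟩, v ⟨j, hj⟩⟫ = if i = j then (1:ℝ) else 0 := by
      intro i j hi hj
      match i, j, hi, hj with
      | 0, 0, hi, hj => simp only [hv0]; simp [he1, hne]
      | 0, 1, hi, hj =>
        simp only [hv0, hv1]; rw [if_neg (show (0:ℕ) ≠ 1 by omega)]; exact hef
      | 0, k+2, hi, hj =>
        simp only [hv0, hv2]; rw [if_neg (show (0:ℕ) ≠ k + 2 by omega)]
        exact hecz e heW _
      | 1, 0, hi, hj =>
        simp only [hv0, hv1]; rw [if_neg (show (1:ℕ) ≠ 0 by omega)]; exact hfe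
      | 1, 1, hi, hj => simp only [hv1]; simp [hf1, hnf]
      | 1, k+2, hi, hj =>
        simp only [hv1, hv2]; rw [if_neg (show (1:ℕ) ≠ k + 2 by omega)]
        exact hecz f hfW _
      | k+2, 0, hi, hj =>
        simp only [hv0, hv2]
        rw [if_neg (show k + 2 ≠ 0 by omega), real_inner_comm]
        exact hecz e heW _
      | k+2, 1, hi, hj =>
        simp only [hv1, hv2]
        rw [if_neg (show k + 2 ≠ 1 by omega), real_inner_comm]
        exact hecz f hfW _
      | k+2, l+2, hi, hj =>
        simp only [hv2, hcc, Fin.mk.injEq]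
        by_cases h : k = l
        · subst h; simp
        · rw [if_neg h, if_neg (show k + 2 ≠ l + 2 by omega)]
    have hov : Orthonormal ℝ v := by
      rw [orthonormal_iff_ite]
      intro i j
      rcases i with ⟨i, hi⟩
      rcases j with ⟨j, hj⟩
      rw [key i j hi hj]
      simp [Fin.ext_iff]
    haveI : Nonempty (Fin (2 * (m + 1))) := ⟨⟨0, by omega⟩⟩
    have hspan : ⊤ ≤ span ℝ (Set.range v) := by
      rw [hov.linearIndependent.span_eq_top_of_card_eq_finrank (by simp [hdim])]
    set b : OrthonormalBasis (Fin (2 * (m + 1))) ℝ V := OrthonormalBasis.mk hov hspan with hbdef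
    have hbv : ∀ i, b i = v i := fun i => by rw [hbdef, OrthonormalBasis.coe_mk]
    refine ⟨b, fun T hT j => ?_⟩
    obtain ⟨j, hjlt⟩ := j
    rcases j with _ | j'
    · obtain ⟨lam, hl1, hl2⟩ := hpair T hT
      refine ⟨lam, ?_, ?_⟩
      · show T (b ⟨0, by omega⟩) = lam • b ⟨1, by omega⟩
        simp only [hbv, hv0, hv1]; exact hl1
      · show T (b ⟨1, by omega⟩) = -(lam • b ⟨0, by omega⟩)
        simp only [hbv, hv0, hv1]; exact hl2
    · obtain ⟨lam, hl1, hl2⟩ :=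
        hc (T.restrict (hKinv T hT)) (mem_restFam hT (hKinv T hT)) ⟨j', by omega⟩
      refine ⟨lam, ?_, ?_⟩
      · show T (b ⟨(2 * j') + 2, by omega⟩) = lam • b ⟨(2 * j' + 1) + 2, by omega⟩
        simp only [hbv, hv2]
        simpa using congrArg Subtype.val hl1
      · show T (b ⟨(2 * j' + 1) + 2, by omega⟩) = -(lam • b ⟨(2 * j') + 2, by omega⟩)
        simp only [hbv, hv2]
        simpa using congrArg Subtype.val hl2

end Stmt15

/-- A commuting family of skew-symmetric endomorphisms of a `2m`-dimensional
real inner product space can be simultaneously put into block-diagonal form with `2×2`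
blocks `((0, −λ_j(T)), (λ_j(T), 0))` with respect to a common orthonormal basis. -/
theorem stmt_15 {V : Type*} [NormedAddCommGroup V] [InnerProductSpace ℝ V]
    [FiniteDimensional ℝ V] {m : ℕ} (hdim : Module.finrank ℝ V = 2 * m)
    (A : Set (V →ₗ[ℝ] V))
    (hskew : ∀ T ∈ A, ∀ u v : V, ⟪T u, v⟫ = -⟪u, T v⟫)
    (hcomm : ∀ T ∈ A, ∀ T' ∈ A, T ∘ₗ T' = T' ∘ₗ T) :
    ∃ (b : OrthonormalBasis (Fin (2 * m)) ℝ V) (lam : (V →ₗ[ℝ] V) → Fin m → ℝ),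
      ∀ T ∈ A, ∀ j : Fin m,
        T (b ⟨2 * (j : ℕ), by omega⟩) = lam T j • b ⟨2 * (j : ℕ) + 1, by omega⟩ ∧
        T (b ⟨2 * (j : ℕ) + 1, by omega⟩) = -(lam T j • b ⟨2 * (j : ℕ), by omega⟩) := by
  obtain ⟨b, hb⟩ := Stmt15.mainAux m hdim A hskew hcomm
  classical
  refine ⟨b, fun T j => if hT : T ∈ A then (hb T hT j).choose else 0, fun T hT j => ?_⟩
  beta_reduce
  rw [dif_pos hT]
  exact (hb T hT j).choose_spec
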